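/- arXiv:0902.0349 — 3 statements merged into one kernel-verified Lean document; each statement's English description precedes it below -/
import Mathlib

section
/- Let R be a Noetherian commutative ring and let F• be a cochain complex of R-modules, bounded above, such that every cohomology module H^i(F•) is finitely generated. Then F• contains a subcomplex F_c• ⊆ F• whose terms are finitely generated R-modules and such that the inclusion F_c• → F• is a quasi-isomorphism. -/
open CategoryTheory CategoryTheory.Limits

namespace Stmt7Aux


variable {R : Type} [CommRing R]

/-- Concrete criterion for a morphism of short complexes of modules to be a quasi-iso. -/
lemma quasiIso_of_concrete {S₁ S₂ : ShortComplex (ModuleCat R)} (ψ : S₁ ⟶ S₂)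
    (hsurj : ∀ x : S₂.X₂, S₂.g x = 0 →
      ∃ (y : S₁.X₂) (z : S₂.X₁), S₁.g y = 0 ∧ ψ.τ₂ y = x + S₂.f z)
    (hinj : ∀ y : S₁.X₂, S₁.g y = 0 → (∃ z, ψ.τ₂ y = S₂.f z) →
      ∃ w : S₁.X₁, S₁.f w = y) :
    ShortComplex.QuasiIso ψ := by
  have hτ₂ : ∀ x : S₁.X₂, x ∈ LinearMap.ker S₁.g.hom → ψ.τ₂ x ∈ LinearMap.ker S₂.g.hom := by
    intro x hx
    have h := congrArg (fun (f : S₁.X₂ ⟶ S₂.X₃) => f x) ψ.comm₂₃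
    change S₂.g (ψ.τ₂ x) = ψ.τ₃ (S₁.g x) at h
    simp only [LinearMap.mem_ker] at hx ⊢
    rw [h, hx, map_zero]
  let φK : LinearMap.ker S₁.g.hom →ₗ[R] LinearMap.ker S₂.g.hom :=
    LinearMap.restrict ψ.τ₂.hom hτ₂
  have hcomm : ∀ w : S₁.X₁, φK (S₁.moduleCatToCycles w) = S₂.moduleCatToCycles (ψ.τ₁ w) := by
    intro w
    ext
    have h := congrArg (fun (f : S₁.X₁ ⟶ S₂.X₂) => f w) ψ.comm₁₂
    change S₂.f (ψ.τ₁ w) = ψ.τ₂ (S₁.f w) at h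
    exact h.symm
  have hle : LinearMap.range S₁.moduleCatToCycles ≤
      Submodule.comap φK (LinearMap.range S₂.moduleCatToCycles) := by
    rintro _ ⟨w, rfl⟩
    exact ⟨ψ.τ₁ w, (hcomm w).symm⟩
  let φH : S₁.moduleCatLeftHomologyData.H ⟶ S₂.moduleCatLeftHomologyData.H :=
    ModuleCat.ofHom (Submodule.mapQ _ _ φK hle)
  let γ : ShortComplex.LeftHomologyMapData ψ S₁.moduleCatLeftHomologyData
      S₂.moduleCatLeftHomologyData :=
    { φK := ModuleCat.ofHom φK
      φH := φH
      commi := by ext x; rfl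
      commf' := by
        ext w
        exact hcomm w
      commπ := by ext x; rfl }
  rw [γ.quasiIso_iff]
  have hbij : Function.Bijective φH := by
    constructor
    · rw [injective_iff_map_eq_zero]
      intro a ha
      obtain ⟨⟨y, hy⟩, rfl⟩ := Submodule.Quotient.mk_surjective _ a
      have hy' : S₁.g y = 0 := hy
      have hmem : φK ⟨y, hy⟩ ∈ LinearMap.range S₂.moduleCatToCycles :=
        (Submodule.Quotient.mk_eq_zero _).mp ha
      obtain ⟨z, hz⟩ := hmem
      have hz' : ψ.τ₂ y = S₂.f z := (Subtype.ext_iff.mp hz).symm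
      obtain ⟨w, hw⟩ := hinj y hy' ⟨z, hz'⟩
      refine (Submodule.Quotient.mk_eq_zero _).mpr ?_
      exact ⟨w, Subtype.ext hw⟩
    · intro a
      obtain ⟨⟨x, hx⟩, rfl⟩ := Submodule.Quotient.mk_surjective _ a
      obtain ⟨y, z, hy, hxy⟩ := hsurj x hx
      refine ⟨Submodule.Quotient.mk ⟨y, hy⟩, ?_⟩
      show Submodule.Quotient.mk (φK ⟨y, hy⟩) = _
      rw [Submodule.Quotient.eq]
      refine ⟨z, ?_⟩
      ext
      show S₂.f z = ψ.τ₂ y - x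
      rw [hxy]; abel
  exact (ConcreteCategory.isIso_iff_bijective _).mpr hbij


variable (K : CochainComplex (ModuleCat R) ℤ)



/-- cycles in degree `i` -/
abbrev Zk (i : ℤ) : Submodule R (K.X i) := LinearMap.ker (K.d i (i+1)).hom

lemma range_congr (a a' b : ℤ) (h : a = a') :
    LinearMap.range (K.d a b).hom = LinearMap.range (K.d a' b).hom := by subst h; rfl

lemma exA [IsNoetherianRing R] (hfg : ∀ i : ℤ, Module.Finite R (K.homology i)) (i : ℤ) :
    ∃ A : Submodule R (K.X i), A.FG ∧ A ≤ Zk K i ∧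
      Zk K i ≤ A ⊔ LinearMap.range (K.d (i-1) i).hom := by
  set S := K.sc' (i-1) i (i+1) with hS
  have e : K.homology i ≅ S.moduleCatLeftHomologyData.H :=
    K.homologyIsoSc' (i-1) i (i+1) (CochainComplex.prev ℤ i) (CochainComplex.next ℤ i) ≪≫
      S.moduleCatHomologyIso
  haveI := hfg i
  haveI fin : Module.Finite R S.moduleCatLeftHomologyData.H := Module.Finite.equiv e.toLinearEquiv
  haveI finQ : Module.Finite R
      (↥(LinearMap.ker S.g.hom) ⧸ LinearMap.range S.moduleCatToCycles) := fin
  obtain ⟨s, hs⟩ := finQ.fg_top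
  let σ : (↥(LinearMap.ker S.g.hom) ⧸ LinearMap.range S.moduleCatToCycles) → LinearMap.ker S.g.hom :=
    Function.surjInv (Submodule.mkQ_surjective _)
  let A₀ : Submodule R (LinearMap.ker S.g.hom) := Submodule.span R (σ '' ↑s)
  refine ⟨Submodule.map (LinearMap.ker S.g.hom).subtype A₀, ?_, ?_, ?_⟩
  · exact Submodule.FG.map _ (Submodule.fg_span ((s.finite_toSet).image σ))
  · intro x hx
    obtain ⟨y, -, rfl⟩ := hx
    exact y.2
  · intro x hx
    set x' : LinearMap.ker S.g.hom := ⟨x, hx⟩ with hx'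
    have h1 : Submodule.map (LinearMap.range S.moduleCatToCycles).mkQ A₀ = ⊤ := by
      rw [Submodule.map_span, ← Set.image_comp]
      have h0 : ((LinearMap.range S.moduleCatToCycles).mkQ ∘ σ) '' ↑s = ↑s :=
        (Set.image_congr (fun a _ => Function.surjInv_eq _ a)).trans (Set.image_id _)
      rw [h0, hs]
    have h2 : (LinearMap.range S.moduleCatToCycles).mkQ x' ∈
        Submodule.map (LinearMap.range S.moduleCatToCycles).mkQ A₀ := by
      rw [h1]; trivial
    obtain ⟨y, hy, hyx⟩ := h2
    have h3 : x' - y ∈ LinearMap.ker (LinearMap.range S.moduleCatToCycles).mkQ := by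
      rw [LinearMap.mem_ker, map_sub, hyx, sub_self]
    rw [Submodule.ker_mkQ] at h3
    obtain ⟨w, hw⟩ := h3
    have hw' : S.f w = x'.val - y.val := by
      have := congrArg Subtype.val hw
      exact this
    have hyA : y.val ∈ Submodule.map (LinearMap.ker S.g.hom).subtype A₀ := ⟨y, hy, rfl⟩
    have hfw : S.f w ∈ LinearMap.range (K.d (i-1) i).hom := ⟨w, rfl⟩
    have hxe : x'.val = y.val + S.f w := by rw [hw']; abel
    have hmem : x'.val ∈ Submodule.map (LinearMap.ker S.g.hom).subtype A₀ ⊔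
        LinearMap.range (K.d (i-1) i).hom := by
      rw [hxe]
      exact Submodule.add_mem_sup hyA hfw
    exact hmem

lemma exC [IsNoetherianRing R] (i : ℤ) (W : Submodule R (K.X (i+1))) (hW : W.FG) :
    ∃ C : Submodule R (K.X i), C.FG ∧
      Submodule.map (K.d i (i+1)).hom C = W ⊓ LinearMap.range (K.d i (i+1)).hom := by
  classical
  haveI : Module.Finite R W := Module.Finite.iff_fg.mpr hW
  have hT : (W ⊓ LinearMap.range (K.d i (i+1)).hom).FG := by
    rw [← Submodule.map_comap_subtype]
    exact Submodule.FG.map _ (IsNoetherian.noetherian _)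
  obtain ⟨t, ht⟩ := hT
  let c : K.X (i+1) → K.X i := fun x =>
    if h : x ∈ LinearMap.range (K.d i (i+1)).hom then h.choose else 0
  have hc : ∀ x ∈ LinearMap.range (K.d i (i+1)).hom, K.d i (i+1) (c x) = x := by
    intro x hx
    simp only [c, dif_pos hx]
    exact hx.choose_spec
  have htmem : ∀ x ∈ (t : Set (K.X (i+1))), x ∈ W ⊓ LinearMap.range (K.d i (i+1)).hom := by
    intro x hx
    rw [← ht]
    exact Submodule.subset_span hx
  refine ⟨Submodule.span R (c '' ↑t), Submodule.fg_span ((t.finite_toSet).image c), ?_⟩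
  rw [Submodule.map_span, ← Set.image_comp]
  have h0 : (⇑(K.d i (i+1)).hom ∘ c) '' ↑t = ↑t := by
    refine (Set.image_congr ?_).trans (Set.image_id _)
    intro a ha
    exact hc a (htmem a ha).2
  rw [h0, ht]


noncomputable def MAux (N : ℤ) (A : ∀ i : ℤ, Submodule R (K.X i))
    (Cc : ∀ i : ℤ, Submodule R (K.X (i+1)) → Submodule R (K.X i)) :
    ∀ i : ℤ, Submodule R (K.X i) := fun i =>
  if _h : N ≤ i then ⊥ else A i ⊔ Cc i (MAux N A Cc (i+1))
termination_by i => (N - i).toNat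
decreasing_by simp_wf; omega

lemma MAux_of_le {N : ℤ} {A} {Cc} {i : ℤ} (h : N ≤ i) : MAux K N A Cc i = ⊥ := by
  rw [MAux]; exact dif_pos h

lemma MAux_of_lt {N : ℤ} {A} {Cc} {i : ℤ} (h : i < N) :
    MAux K N A Cc i = A i ⊔ Cc i (MAux K N A Cc (i+1)) := by
  rw [MAux]; exact dif_neg (by omega)

end Stmt7Aux

/-- Let `R` be Noetherian and `F•` a bounded-above cochain complex of `R`-modules
with finitely generated cohomology. Then `F•` contains a subcomplex with finitely
generated terms such that the inclusion is a quasi-isomorphism. -/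
theorem stmt_7 (R : Type) [CommRing R] [IsNoetherianRing R]
    (K : CochainComplex (ModuleCat R) ℤ)
    (hbdd : ∃ N : ℤ, ∀ i ≥ N, IsZero (K.X i))
    (hfg : ∀ i : ℤ, Module.Finite R (K.homology i)) :
    ∃ (G : CochainComplex (ModuleCat R) ℤ) (φ : G ⟶ K),
      (∀ i, Module.Finite R (G.X i)) ∧ (∀ i, Function.Injective (φ.f i)) ∧
      QuasiIso φ := by
  classical
  obtain ⟨N, hN⟩ := hbdd
  have hzero : ∀ i, N ≤ i → ∀ x : K.X i, x = 0 := by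
    intro i hi x
    have h0 : (𝟙 (K.X i) : K.X i ⟶ K.X i) = 0 := (hN i hi).eq_of_src _ _
    calc x = (𝟙 (K.X i) : K.X i ⟶ K.X i) x := rfl
    _ = (0 : K.X i ⟶ K.X i) x := by rw [h0]
    _ = 0 := rfl
  -- choice functions
  let A : ∀ i : ℤ, Submodule R (K.X i) := fun i => (Stmt7Aux.exA K hfg i).choose
  have hA : ∀ i, (A i).FG ∧ A i ≤ Stmt7Aux.Zk K i ∧
      Stmt7Aux.Zk K i ≤ A i ⊔ LinearMap.range (K.d (i-1) i).hom := fun i => (Stmt7Aux.exA K hfg i).choose_spec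
  let Cc : ∀ i : ℤ, Submodule R (K.X (i+1)) → Submodule R (K.X i) := fun i W =>
    if h : W.FG then (Stmt7Aux.exC K i W h).choose else ⊥
  have hCc : ∀ i W (hW : W.FG), (Cc i W).FG ∧
      Submodule.map (K.d i (i+1)).hom (Cc i W) = W ⊓ LinearMap.range (K.d i (i+1)).hom := by
    intro i W hW
    simpa only [Cc, dif_pos hW] using (Stmt7Aux.exC K i W hW).choose_spec
  let M : ∀ i : ℤ, Submodule R (K.X i) := Stmt7Aux.MAux K N A Cc
  have heq1 : ∀ i : ℤ, N ≤ i → M i = ⊥ := fun i hi => Stmt7Aux.MAux_of_le K hi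
  have heq2 : ∀ i : ℤ, i < N → M i = A i ⊔ Cc i (M (i+1)) := fun i hi => Stmt7Aux.MAux_of_lt K hi
  -- finite generation
  have h1aux : ∀ n : ℕ, ∀ i : ℤ, (N - i).toNat ≤ n → (M i).FG := by
    intro n
    induction n with
    | zero =>
      intro i hi
      rw [heq1 i (by omega)]
      exact Submodule.fg_bot
    | succ n ih =>
      intro i hi
      by_cases h : N ≤ i
      · rw [heq1 i h]; exact Submodule.fg_bot
      · rw [heq2 i (by omega)]
        exact Submodule.FG.sup (hA i).1 (hCc i _ (ih (i+1) (by omega))).1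
  have h1 : ∀ i, (M i).FG := fun i => h1aux (N - i).toNat i le_rfl
  -- subcomplex property
  have h2 : ∀ i, ∀ x ∈ M i, K.d i (i+1) x ∈ M (i+1) := by
    intro i x hx
    by_cases h : N ≤ i
    · rw [heq1 i h] at hx
      simp only [Submodule.mem_bot] at hx
      rw [hx, map_zero]; exact Submodule.zero_mem _
    · rw [heq2 i (by omega)] at hx
      obtain ⟨a, ha, c, hc, rfl⟩ := Submodule.mem_sup.mp hx
      rw [map_add]
      refine Submodule.add_mem _ ?_ ?_
      · have : K.d i (i+1) a = 0 := (hA i).2.1 ha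
        rw [this]; exact Submodule.zero_mem _
      · have hmap := (hCc i (M (i+1)) (h1 (i+1))).2
        have hmem : K.d i (i+1) c ∈ Submodule.map (K.d i (i+1)).hom (Cc i (M (i+1))) :=
          ⟨c, hc, rfl⟩
        rw [hmap] at hmem
        exact hmem.1
  -- surjectivity onto homology
  have h3 : ∀ j : ℤ, Stmt7Aux.Zk K (j+1) ≤ M (j+1) ⊔ LinearMap.range (K.d j (j+1)).hom := by
    intro j x hx
    by_cases h : N ≤ j + 1
    · rw [hzero (j+1) h x]; exact Submodule.zero_mem _
    · have hAj := (hA (j+1)).2.2 hx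
      rw [Stmt7Aux.range_congr K (j+1-1) j (j+1) (by omega)] at hAj
      have hle : A (j+1) ≤ M (j+1) := by
        rw [heq2 (j+1) (by omega)]
        exact le_sup_left
      exact sup_le_sup_right hle _ hAj
  -- boundaries hitting the subcomplex
  have h4 : ∀ j : ℤ, ∀ x, x ∈ M (j+1) → x ∈ LinearMap.range (K.d j (j+1)).hom →
      x ∈ Submodule.map (K.d j (j+1)).hom (M j) := by
    intro j x hx hr
    by_cases h : N ≤ j + 1
    · rw [heq1 (j+1) h] at hx
      simp only [Submodule.mem_bot] at hx
      rw [hx]; exact Submodule.zero_mem _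
    · have hmap := (hCc j (M (j+1)) (h1 (j+1))).2
      have hc : x ∈ Submodule.map (K.d j (j+1)).hom (Cc j (M (j+1))) := by
        rw [hmap]; exact ⟨hx, hr⟩
      refine Submodule.map_mono ?_ hc
      rw [heq2 j (by omega)]
      exact le_sup_right
  -- the subcomplex
  let dM : ∀ i : ℤ, ModuleCat.of R (M i) ⟶ ModuleCat.of R (M (i+1)) := fun i =>
    ModuleCat.ofHom ((K.d i (i+1)).hom.restrict (h2 i))
  let G : CochainComplex (ModuleCat R) ℤ :=
    CochainComplex.of (fun i => ModuleCat.of R (M i)) dM (by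
      intro n
      ext x
      show K.d (n+1) (n+1+1) (K.d n (n+1) x.1) = 0
      exact LinearMap.congr_fun (congrArg ModuleCat.Hom.hom (K.d_comp_d n (n+1) (n+1+1))) x.1)
  have hGd : ∀ i : ℤ, G.d i (i+1) = dM i := fun i => CochainComplex.of_d (fun i => ModuleCat.of R (M i)) dM i
  let φ : G ⟶ K :=
    { f := fun i => ModuleCat.ofHom (M i).subtype
      comm' := by
        intro i j hij
        change i + 1 = j at hij
        subst hij
        show _ ≫ K.d i (i+1) = G.d i (i+1) ≫ _
        rw [hGd i]
        ext x
        rfl }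
  refine ⟨G, φ, ?_, ?_, ?_⟩
  · intro i
    exact Module.Finite.iff_fg.mpr (h1 i)
  · intro i
    exact Subtype.coe_injective
  · rw [quasiIso_iff]
    intro i
    obtain ⟨j, rfl⟩ : ∃ j, i = j + 1 := ⟨i - 1, by omega⟩
    rw [quasiIsoAt_iff' φ j (j+1) (j+1+1) (by rw [CochainComplex.prev]; omega)
      (CochainComplex.next ℤ (j+1))]
    apply Stmt7Aux.quasiIso_of_concrete
    · -- surjectivity
      intro x hx
      have hxZ : x ∈ Stmt7Aux.Zk K (j+1) := hx
      obtain ⟨m, hm, b, hb, rfl⟩ := Submodule.mem_sup.mp (h3 j hxZ)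
      obtain ⟨z, rfl⟩ := hb
      have hmZ : m ∈ Stmt7Aux.Zk K (j+1) := by
        have hbZ : (K.d j (j+1)).hom z ∈ Stmt7Aux.Zk K (j+1) :=
          LinearMap.congr_fun (congrArg ModuleCat.Hom.hom (K.d_comp_d j (j+1) (j+1+1))) z
        have hsub := Submodule.sub_mem _ hxZ hbZ
        have e : m + (K.d j (j+1)).hom z - (K.d j (j+1)).hom z = m := add_sub_cancel_right _ _
        exact e ▸ hsub
      refine ⟨⟨m, hm⟩, -z, ?_, ?_⟩
      · show G.d (j+1) (j+1+1) ⟨m, hm⟩ = 0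
        rw [hGd (j+1)]
        apply Subtype.ext
        exact hmZ
      · show m = (m + K.d j (j+1) z) + K.d j (j+1) (-z)
        rw [map_neg]; abel
    · -- injectivity
      intro y hy hz
      have hyZ : y.1 ∈ Stmt7Aux.Zk K (j+1) := by
        have hy' : G.d (j+1) (j+1+1) y = 0 := hy
        rw [hGd (j+1)] at hy'
        exact congrArg Subtype.val hy'
      obtain ⟨z, hz⟩ := hz
      have hyr : y.1 ∈ LinearMap.range (K.d j (j+1)).hom := ⟨z, hz.symm⟩
      obtain ⟨w, hw, hweq⟩ := h4 j _ y.2 hyr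
      refine ⟨⟨w, hw⟩, ?_⟩
      show G.d j (j+1) ⟨w, hw⟩ = y
      rw [hGd j]
      apply Subtype.ext
      exact hweq
end

section
/- Let D be a triangulated category carrying two t-structures, with truncation functors τ⁻ and τ⁺ and aisles (D^{−,≤n}, D^{−,≥n}) and (D^{+,≤n}, D^{+,≥n}) respectively. Assume D^{−,≥2} ⊆ D^{+,≥0}. Then for every object F ∈ D, the object τ⁻_{≤0}(τ⁺_{≥0} F) lies in D^{−,≤0} ∩ D^{+,≥0}. -/
open CategoryTheory CategoryTheory.Limits CategoryTheory.Pretriangulated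

lemma aux_zero {C : Type*} [Category C] [Preadditive C] [HasZeroObject C]
    [HasShift C ℤ] [∀ n : ℤ, (shiftFunctor C n).Additive] [Pretriangulated C]
    (t : Triangulated.TStructure C) {X Y : C} (n : ℤ)
    (hX : t.le n X) (hY : t.ge (n + 1) Y) (f : X ⟶ Y) : f = 0 := by
  have hX' := t.le_shift n n 0 (add_zero n) X hX
  have hY' := t.ge_shift (n + 1) n 1 (by ring) Y hY
  have h := t.zero' ((shiftFunctor C n).map f) hX' hY'
  apply (shiftFunctor C n).map_injective
  rw [h, Functor.map_zero]

/-- Let `t₁`, `t₂` be two t-structures on a triangulated category with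
`D^{1,≥2} ⊆ D^{2,≥0}`. Given `F`, let `F₁ = τ²_{≥0} F` (via the truncation
triangle `A → F → F₁` with `A ∈ D^{2,≤-1}`, `F₁ ∈ D^{2,≥0}`) and let
`G = τ¹_{≤0} F₁` (via the truncation triangle `G → F₁ → B` with `G ∈ D^{1,≤0}`,
`B ∈ D^{1,≥1}`). Then `G = τ¹_{≤0} τ²_{≥0} F` lies in `D^{1,≤0} ∩ D^{2,≥0}`. -/
theorem stmt_11 {C : Type*} [Category C] [Preadditive C] [HasZeroObject C]
    [HasShift C ℤ] [∀ n : ℤ, (shiftFunctor C n).Additive] [Pretriangulated C]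
    (t₁ t₂ : Triangulated.TStructure C)
    (h12 : ∀ X : C, t₁.ge 2 X → t₂.ge 0 X)
    (F F₁ G A B : C)
    (hA : t₂.le (-1) A) (hF₁ : t₂.ge 0 F₁)
    (f₁ : A ⟶ F) (g₁ : F ⟶ F₁) (d₁ : F₁ ⟶ A⟦(1 : ℤ)⟧)
    (hT₁ : Triangle.mk f₁ g₁ d₁ ∈ distTriang C)
    (hG : t₁.le 0 G) (hB : t₁.ge 1 B)
    (f₂ : G ⟶ F₁) (g₂ : F₁ ⟶ B) (d₂ : B ⟶ G⟦(1 : ℤ)⟧)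
    (hT₂ : Triangle.mk f₂ g₂ d₂ ∈ distTriang C) :
    t₁.le 0 G ∧ t₂.ge 0 G := by
  refine ⟨hG, ?_⟩
  -- B⟦-1⟧ is in t₂.ge 0
  have hB2 : t₂.ge 0 (B⟦(-1 : ℤ)⟧) :=
    h12 _ (t₁.ge_shift 1 (-1) 2 (by ring) B hB)
  -- truncation triangle X → G → Y for t₂ at (-1, 0)
  obtain ⟨X, Y, hX, hY, a, b, c, hT⟩ := t₂.exists_triangle G (-1) 0 (by ring)
  -- a : X ⟶ G is zero
  have ha : a = 0 := by
    have hcomp : a ≫ f₂ = 0 := by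
      have := aux_zero t₂ (-1) hX (by simpa using hF₁) (a ≫ f₂)
      simpa using this
    obtain ⟨g, hg⟩ := Triangle.coyoneda_exact₂ _ (inv_rot_of_distTriang _ hT₂) a
      hcomp
    have hg0 : g = 0 := aux_zero t₂ (-1) hX (by simpa using hB2) g
    rw [hg, hg0, zero_comp]; rfl
  -- X is zero
  have hXzero : IsZero X := by
    rw [IsZero.iff_id_eq_zero]
    obtain ⟨g, hg⟩ := Triangle.coyoneda_exact₂ _ (inv_rot_of_distTriang _ hT)
      (𝟙 X) ((Category.id_comp _).trans ha)
    have hY1 : t₂.ge 0 (Y⟦(-1 : ℤ)⟧) := by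
      have h1 : t₂.ge 1 (Y⟦(-1 : ℤ)⟧) := t₂.ge_shift 0 (-1) 1 (by ring) Y hY
      exact t₂.ge_antitone (by norm_num) _ h1
    have hg0 : g = 0 := aux_zero t₂ (-1) hX (by simpa using hY1) g
    rw [hg, hg0, zero_comp]; rfl
  -- hence b : G ⟶ Y is an iso, so G ∈ t₂.ge 0
  have : IsIso b := (Triangle.isZero₁_iff_isIso₂ _ hT).1 hXzero
  exact (t₂.ge 0).prop_of_iso (asIso b).symm hY
end

section
/- Let (R, m) be a Noetherian local ring, I ⊆ m an ideal, and let M• be a bounded-below complex of R-modules all of whose cohomology modules are torsion (every element killed by a power of m). If n = inf{i : H^i(M•) ≠ 0} is finite, then inf{i : H^i(RHom_R(R/I, M•)) ≠ 0} = n; in particular, RHom_R(R/I, M•) ∈ D^{≥ n} if and only if M• ∈ D^{≥ n}. -/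
open CategoryTheory CategoryTheory.Limits

lemma aux_retract {R M N : Type} [CommRing R] [AddCommGroup M] [AddCommGroup N]
    [Module R M] [Module R N] (hM : Module.Injective R M)
    (p : M →ₗ[R] N) (s : N →ₗ[R] M) (hps : ∀ x, p (s x) = x) :
    Module.Injective R N where
  out X Y _ _ _ _ f hf g := by
    obtain ⟨h, hh⟩ := hM.out f hf (s ∘ₗ g)
    exact ⟨p ∘ₗ h, fun x => by simp [hh x, hps]⟩

lemma aux_section {R A B : Type} [CommRing R] [AddCommGroup A] [AddCommGroup B]
    [Module R A] [Module R B] (d : A →ₗ[R] B)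
    (r : A →ₗ[R] LinearMap.ker d) (hr : ∀ (x : A) (hx : x ∈ LinearMap.ker d), r x = ⟨x, hx⟩) :
    ∃ s : LinearMap.range d →ₗ[R] A, ∀ b : LinearMap.range d, d (s b) = b := by
  let q : A →ₗ[R] A := LinearMap.id - (LinearMap.ker d).subtype ∘ₗ r
  have hq : ∀ x ∈ LinearMap.ker d, q x = 0 := by
    intro x hx
    simp only [q, LinearMap.sub_apply, LinearMap.id_apply, LinearMap.coe_comp,
      Function.comp_apply, Submodule.coe_subtype, hr x hx, sub_self]
  let s0 : (A ⧸ LinearMap.ker d) →ₗ[R] A := Submodule.liftQ _ q (fun x hx => hq x hx)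
  let e : (A ⧸ LinearMap.ker d) ≃ₗ[R] LinearMap.range d := d.quotKerEquivRange
  refine ⟨s0 ∘ₗ (e.symm : LinearMap.range d →ₗ[R] A ⧸ LinearMap.ker d), ?_⟩
  rintro ⟨b, y, rfl⟩
  have he : e (Submodule.Quotient.mk y) = ⟨d y, ⟨y, rfl⟩⟩ := by
    apply Subtype.ext
    simp [e, LinearMap.quotKerEquivRange]
  have : e.symm ⟨d y, ⟨y, rfl⟩⟩ = Submodule.Quotient.mk y := by
    rw [← he, LinearEquiv.symm_apply_apply]
  simp only [LinearMap.coe_comp, Function.comp_apply, LinearEquiv.coe_coe, this]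
  have : s0 (Submodule.Quotient.mk y) = q y := rfl
  rw [this]
  have h2 : d (q y) = d y := by
    simp only [q, map_sub, LinearMap.sub_apply, LinearMap.id_apply, LinearMap.coe_comp,
      Function.comp_apply, Submodule.coe_subtype]
    rw [(r y).2, sub_zero]
  exact h2

lemma aux_nonzero_tors (R : Type) [CommRing R] [IsLocalRing R] (I : Ideal R)
    (hI : I ≤ IsLocalRing.maximalIdeal R)
    (H H' : ModuleCat R) (e : H ≅ H')
    (htors : ∀ x : H, ∃ n : ℕ, ∀ a ∈ (IsLocalRing.maximalIdeal R) ^ n, a • x = 0)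
    (hn : ¬ IsZero H) :
    ∃ x : H', x ≠ 0 ∧ ∀ a ∈ I, a • x = 0 := by
  have hns : ¬ IsZero H' := fun h => hn (h.of_iso e)
  have : Nontrivial H' := by
    by_contra hc
    rw [not_nontrivial_iff_subsingleton] at hc
    exact hns (ModuleCat.isZero_of_subsingleton H')
  obtain ⟨x0, hx0⟩ := exists_ne (0 : H')
  obtain ⟨k0, hk0⟩ := htors (e.inv x0)
  have hk0' : ∀ a ∈ (IsLocalRing.maximalIdeal R) ^ k0, a • x0 = 0 := by
    intro a ha
    have h1 : e.hom.hom.comp e.inv.hom = LinearMap.id := by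
      rw [← ModuleCat.hom_comp, e.inv_hom_id]; rfl
    have : e.hom (a • e.inv x0) = a • x0 := by
      rw [map_smul]
      exact congrArg (a • ·) (LinearMap.congr_fun h1 x0)
    rw [← this, hk0 a ha, map_zero]
  have hex : ∃ k, ∀ a ∈ (IsLocalRing.maximalIdeal R) ^ k, a • x0 = 0 := ⟨k0, hk0'⟩
  classical
  have hk := Nat.find_spec hex
  have hkne : Nat.find hex ≠ 0 := by
    intro h
    apply hx0
    have := hk 1 (by rw [h, pow_zero, Ideal.one_eq_top]; trivial)
    simpa using this
  obtain ⟨k', hk'⟩ : ∃ k', Nat.find hex = k' + 1 := ⟨Nat.find hex - 1, by omega⟩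
  rw [hk'] at hk
  have hlt := Nat.find_min hex (m := k') (by omega)
  push_neg at hlt
  obtain ⟨a, ha, hax⟩ := hlt
  refine ⟨a • x0, hax, ?_⟩
  intro b hb
  rw [smul_smul, mul_comm]
  exact hk _ (by rw [pow_succ]; exact Ideal.mul_mem_mul ha (hI hb))

lemma aux_cocycle (R : Type) [CommRing R] (I : Ideal R)
    (K : CochainComplex (ModuleCat R) ℤ) (n : ℤ)
    (hBaer : Module.Baer R (K.X (n-1)))
    (s : LinearMap.range (K.d (n-1) n).hom →ₗ[R] K.X (n-1))
    (hs : ∀ b, K.d (n-1) n (s b) = (b : K.X n))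
    (x1 : (K.sc' (n-1) n (n+1)).moduleCatLeftHomologyData.H)
    (hx1I : ∀ a ∈ I, a • x1 = 0) :
    ∃ z' : K.X n, (K.d n (n+1) z' = 0) ∧ (∀ a ∈ I, a • z' = 0) ∧
      ∃ hz' : z' ∈ LinearMap.ker ((K.sc' (n-1) n (n+1)).g.hom),
        Submodule.Quotient.mk (p := LinearMap.range (K.sc' (n-1) n (n+1)).moduleCatToCycles)
          ⟨z', hz'⟩ = x1 := by
  obtain ⟨z, hz⟩ := Submodule.Quotient.mk_surjective _ x1
  have hzker : K.d n (n+1) z.1 = 0 := z.2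
  have hmem : ∀ a ∈ I, a • z.1 ∈ LinearMap.range (K.d (n-1) n).hom := by
    intro a ha
    have : Submodule.Quotient.mk (p := LinearMap.range (K.sc' (n-1) n (n+1)).moduleCatToCycles) (a • z) = 0 := by
      rw [← hz] at hx1I
      have := hx1I a ha
      rw [Submodule.Quotient.mk_smul]
      exact this
    rw [Submodule.Quotient.mk_eq_zero] at this
    obtain ⟨y, hy⟩ := this
    refine ⟨y, ?_⟩
    have : (K.sc' (n-1) n (n+1)).f y = a • z.1 := congrArg Subtype.val hy
    exact this
  let zv : ↑(K.X n) := z.1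
  have hzv : zv = z.1 := rfl
  let fI : I →ₗ[R] K.X (n-1) :=
    s ∘ₗ LinearMap.codRestrict _ ((LinearMap.toSpanSingleton R _ zv) ∘ₗ I.subtype)
      (fun a => by rw [LinearMap.coe_comp, Function.comp_apply, Submodule.coe_subtype,
        LinearMap.toSpanSingleton_apply, hzv]; exact hmem a.1 a.2)
  have hfI : ∀ (a : R) (ha : a ∈ I), K.d (n-1) n (fI ⟨a, ha⟩) = a • z.1 := by
    intro a ha
    show K.d (n-1) n (s _) = _
    rw [hs]
    show a • zv = a • z.1
    rw [hzv]
    rfl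
  obtain ⟨g1, hg1⟩ := hBaer I fI
  refine ⟨zv - K.d (n-1) n (g1 1), ?_, ?_, ?_⟩
  · rw [map_sub, hzv, hzker]
    have : K.d n (n+1) (K.d (n-1) n (g1 1)) = 0 := by
      have := K.d_comp_d (n-1) n (n+1)
      calc K.d n (n+1) (K.d (n-1) n (g1 1)) = (K.d (n-1) n ≫ K.d n (n+1)) (g1 1) := rfl
        _ = 0 := by rw [this]; rfl
    rw [this, sub_zero]
  · intro a ha
    have h1 : a • g1 1 = g1 a := by rw [← map_smul, smul_eq_mul, mul_one]
    rw [smul_sub, ← map_smul, h1, hg1 a ha,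
      show K.d (n-1) n (fI ⟨a, ha⟩) = a • zv from hfI a ha, sub_self]
  · have hz'mem : zv - K.d (n-1) n (g1 1) ∈ LinearMap.ker (K.sc' (n-1) n (n+1)).g.hom := by
      show K.d n (n+1) _ = 0
      rw [map_sub, hzv, hzker]
      calc (0 : K.X (n+1)) - K.d n (n+1) (K.d (n-1) n (g1 1))
          = 0 - (K.d (n-1) n ≫ K.d n (n+1)) (g1 1) := rfl
        _ = 0 := by rw [K.d_comp_d]; show (0:K.X (n+1)) - 0 = 0; rw [sub_zero]
    refine ⟨hz'mem, ?_⟩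
    rw [← hz]
    rw [← sub_eq_zero, ← Submodule.Quotient.mk_sub, Submodule.Quotient.mk_eq_zero]
    refine ⟨-(g1 1), ?_⟩
    apply Subtype.ext
    rw [Submodule.coe_sub]
    show K.d (n-1) n (-(g1 1)) = (zv - K.d (n-1) n (g1 1)) - zv
    rw [map_neg]
    abel

/-- Let `(R, m)` be Noetherian local, `I ⊆ m`, and `M•` a bounded-below complex
of injective `R`-modules with torsion cohomology (so `Hom(R/I, M•)` computes
`RHom(R/I, M•)`). If the lowest nonvanishing cohomology of `M•` is in degree
`n`, then so is that of `RHom_R(R/I, M•)`. -/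
theorem stmt_18 (R : Type) [CommRing R] [IsNoetherianRing R] [IsLocalRing R]
    (I : Ideal R) (hI : I ≤ IsLocalRing.maximalIdeal R)
    (K : CochainComplex (ModuleCat R) ℤ)
    (hinj : ∀ i, Module.Injective R (K.X i))
    (hbdd : ∃ N : ℤ, ∀ i ≤ N, IsZero (K.X i))
    (htors : ∀ (i : ℤ) (x : K.homology i), ∃ n : ℕ,
      ∀ a ∈ (IsLocalRing.maximalIdeal R) ^ n, a • x = 0)
    (n : ℤ) (hn : ¬ IsZero (K.homology n))
    (hbot : ∀ i < n, IsZero (K.homology i)) :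
    ¬ IsZero (((((linearCoyoneda R (ModuleCat R)).obj
        (Opposite.op (ModuleCat.of R (R ⧸ I)))).mapHomologicalComplex
        (ComplexShape.up ℤ)).obj K).homology n) ∧
    ∀ i < n, IsZero (((((linearCoyoneda R (ModuleCat R)).obj
        (Opposite.op (ModuleCat.of R (R ⧸ I)))).mapHomologicalComplex
        (ComplexShape.up ℤ)).obj K).homology i) := by
  classical
  obtain ⟨N, hN⟩ := hbdd
  set F := (linearCoyoneda R (ModuleCat R)).obj (Opposite.op (ModuleCat.of R (R ⧸ I))) with hF
  set L := (F.mapHomologicalComplex (ComplexShape.up ℤ)).obj K with hL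
  -- d ∘ d = 0 elementwise
  have hdd : ∀ (i j k : ℤ) (x : K.X i), K.d j k (K.d i j x) = 0 := by
    intro i j k x
    calc K.d j k (K.d i j x) = (K.d i j ≫ K.d j k) x := rfl
      _ = 0 := by rw [K.d_comp_d]; rfl
  -- exactness of K below n, elementwise
  have hex : ∀ i < n, ∀ x : K.X i, K.d i (i+1) x = 0 →
      ∃ y : K.X (i-1), K.d (i-1) i y = x := by
    intro i hi
    have h := (K.exactAt_iff_isZero_homology i).mpr (hbot i hi)
    rw [K.exactAt_iff' (i-1) i (i+1) (by simp) (by simp),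
      ShortComplex.moduleCat_exact_iff] at h
    exact h
  have hrk : ∀ (i j : ℤ), i < n → i + 1 = j →
      LinearMap.range (K.d (i-1) i).hom
        = LinearMap.ker (K.d i j).hom := by
    intro i j hi hij
    subst hij
    apply le_antisymm
    · rintro x ⟨y, rfl⟩
      exact LinearMap.mem_ker.mpr (hdd _ _ _ y)
    · intro x hx
      exact hex i hi x hx
  -- the key induction: retraction onto kernels in degrees < n
  have claim : ∀ (k : ℕ) (i j : ℤ), i ≤ N + k → i < n → i + 1 = j →
      ∃ r : K.X i →ₗ[R] LinearMap.ker (K.d i j).hom,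
        ∀ (x : K.X i) (hx : x ∈ LinearMap.ker (K.d i j).hom),
          r x = ⟨x, hx⟩ := by
    intro k
    induction k with
    | zero =>
      intro i j hiN _ _
      have hz : ∀ x : K.X i, x = 0 := by
        intro x
        have h0 := (hN i (by push_cast at hiN; omega)).eq_of_src (𝟙 (K.X i)) 0
        calc x = (𝟙 (K.X i)) x := rfl
          _ = (0 : K.X i ⟶ K.X i) x := by rw [h0]
          _ = 0 := rfl
      refine ⟨0, fun x hx => ?_⟩
      apply Subtype.ext
      show (0 : ↑(K.X i)) = x
      rw [hz x]
    | succ k IH =>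
      intro i j hiN hin hij
      by_cases hik : i ≤ N + k
      · exact IH i j hik hin hij
      · obtain ⟨r', hr'⟩ := IH (i-1) i (by push_cast at hiN ⊢; omega) (by omega) (by omega)
        obtain ⟨s, hs⟩ := aux_section (K.d (i-1) i).hom r' hr'
        have hinjr : Module.Injective R
            (LinearMap.range (K.d (i-1) i).hom) := by
          refine aux_retract (hinj (i-1)) (K.d (i-1) i).hom.rangeRestrict
            s (fun b => ?_)
          apply Subtype.ext
          show K.d (i-1) i (s b) = b.1
          exact hs b
        rw [hrk i j hin hij] at hinjr
        obtain ⟨h, hh⟩ := hinjr.out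
          (LinearMap.ker (K.d i j).hom).subtype
          (Submodule.injective_subtype _) LinearMap.id
        exact ⟨h, fun x hx => hh ⟨x, hx⟩⟩
  have claim' : ∀ (i j : ℤ), i < n → i + 1 = j →
      ∃ r : K.X i →ₗ[R] LinearMap.ker (K.d i j).hom,
        ∀ (x : K.X i) (hx : x ∈ LinearMap.ker (K.d i j).hom),
          r x = ⟨x, hx⟩ := by
    intro i j hi hij
    exact claim (i - N).toNat i j (by omega) hi hij
  -- sections of the differential onto its image, for i ≤ n
  have sect : ∀ i ≤ n, ∃ s : LinearMap.range (K.d (i-1) i).hom →ₗ[R] K.X (i-1),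
      ∀ b, K.d (i-1) i (s b) = (b : K.X i) := by
    intro i hi
    obtain ⟨r, hr⟩ := claim' (i-1) i (by omega) (by omega)
    exact aux_section _ r hr
  constructor
  · -- nonvanishing at n
    have e : K.homology n ≅ (K.sc' (n-1) n (n+1)).moduleCatLeftHomologyData.H :=
      ShortComplex.homologyMapIso (K.isoSc' (n-1) n (n+1) (by simp) (by simp)) ≪≫
        (K.sc' (n-1) n (n+1)).moduleCatHomologyIso
    obtain ⟨x1, hx1, hx1I⟩ := aux_nonzero_tors R I hI _ _ e (htors n) hn
    obtain ⟨s, hs⟩ := sect n le_rfl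
    obtain ⟨z', hz'd, hz'I, hz'mem, hz'cls⟩ :=
      aux_cocycle R I K n (Module.Baer.of_injective (hinj (n-1))) s hs x1 hx1I
    intro h0
    have hexL := (L.exactAt_iff_isZero_homology n).mpr h0
    rw [L.exactAt_iff' (n-1) n (n+1) (by simp) (by simp),
      ShortComplex.moduleCat_exact_iff] at hexL
    let φ : (ModuleCat.of R (R ⧸ I)) ⟶ K.X n := ModuleCat.ofHom
      (Submodule.liftQ I (LinearMap.toSpanSingleton R _ z') (fun a ha => by
        rw [LinearMap.mem_ker, LinearMap.toSpanSingleton_apply]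
        exact hz'I a ha))
    have hφ1 : φ (Submodule.Quotient.mk 1) = z' := by
      show Submodule.liftQ I (LinearMap.toSpanSingleton R _ z') _ (Submodule.Quotient.mk 1) = z'
      rw [Submodule.liftQ_apply, LinearMap.toSpanSingleton_apply, one_smul]
    have hφg : (L.sc' (n-1) n (n+1)).g φ = 0 := by
      apply ModuleCat.hom_ext
      apply LinearMap.ext
      intro v
      obtain ⟨r, rfl⟩ := Submodule.Quotient.mk_surjective I v
      show K.d n (n+1) (φ (Submodule.Quotient.mk r)) = 0
      have : φ (Submodule.Quotient.mk r) = r • z' := by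
        show Submodule.liftQ I (LinearMap.toSpanSingleton R _ z') _ (Submodule.Quotient.mk r) = r • z'
        rw [Submodule.liftQ_apply, LinearMap.toSpanSingleton_apply]
      rw [this, map_smul, hz'd, smul_zero]
    obtain ⟨ψ, hψ⟩ := hexL φ hφg
    let ψ' : ModuleCat.of R (R ⧸ I) →ₗ[R] K.X (n-1) := (ψ : ModuleCat.of R (R ⧸ I) ⟶ K.X (n-1)).hom
    have hzb : z' = K.d (n-1) n (ψ' (Submodule.Quotient.mk 1)) := by
      have h1 : K.d (n-1) n (ψ' (Submodule.Quotient.mk (1 : R)))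
          = φ (Submodule.Quotient.mk (1 : R)) :=
        congrArg (fun f : ModuleCat.of R (R ⧸ I) ⟶ K.X n => f (Submodule.Quotient.mk (1 : R))) hψ
      rw [hφ1] at h1
      exact h1.symm
    apply hx1
    rw [← hz'cls]
    refine (Submodule.Quotient.mk_eq_zero _).mpr ?_
    refine ⟨ψ' (Submodule.Quotient.mk 1), ?_⟩
    apply Subtype.ext
    show K.d (n-1) n (ψ' (Submodule.Quotient.mk 1)) = z'
    exact hzb.symm
  · -- vanishing below n
    intro i hi
    rw [← L.exactAt_iff_isZero_homology i]
    rw [L.exactAt_iff' (i-1) i (i+1) (by simp) (by simp),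
      ShortComplex.moduleCat_exact_iff]
    intro φ hφ
    let φ' : ModuleCat.of R (R ⧸ I) →ₗ[R] K.X i := (φ : ModuleCat.of R (R ⧸ I) ⟶ K.X i).hom
    have hφ' : ∀ v, K.d i (i+1) (φ' v) = 0 := by
      intro v
      exact congrArg (fun f : ModuleCat.of R (R ⧸ I) ⟶ K.X (i+1) => f v) hφ
    obtain ⟨s, hs⟩ := sect i (le_of_lt hi)
    refine ⟨ModuleCat.ofHom (s ∘ₗ LinearMap.codRestrict _ φ' (fun v => ?_)), ?_⟩
    · rw [hrk i (i+1) hi rfl]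
      exact LinearMap.mem_ker.mpr (hφ' v)
    · apply ModuleCat.hom_ext
      apply LinearMap.ext
      intro v
      show K.d (i-1) i (s _) = φ' v
      rw [hs]
      rfl
end
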